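/- arXiv:0906.4693 — 5 statements merged into one kernel-verified Lean document; each statement's English description precedes it below -/
import Mathlib

section
/- The trace of the (2p-1)-fold wedge power of a symmetric-matrix-valued 1-form vanishes when p is even. Precisely: let V be a real vector space and λ an alternating 1-form on V with values in n×n real matrices such that λ(v) is a symmetric matrix for every v ∈ V. Define the alternating (2p-1)-form λ_p by λ_p(v_1,…,v_{2p-1}) = Σ_{σ ∈ S_{2p-1}} sign(σ) · tr(λ(v_{σ(1)})·λ(v_{σ(2)})⋯λ(v_{σ(2p-1)})). Then λ_p = 0 whenever p is even. -/
private lemma aux_reverse_ofFn {n : ℕ} {α : Type*} (f : Fin n → α) :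
    (List.ofFn f).reverse = List.ofFn (fun i => f i.rev) := by
  apply List.ext_getElem <;> simp [Fin.rev]
  congr 1
  intro i h1
  exact congrArg f (Fin.ext (show n - 1 - i = n - (i + 1) by omega))

private lemma aux_rotate_mul_rev (n : ℕ) : (finRotate (n+1)) * Fin.revPerm =
    Equiv.Perm.decomposeFin.symm (0, Fin.revPerm) := by
  apply Equiv.ext
  intro i
  refine Fin.cases ?_ (fun j => ?_) i
  · simp [Equiv.Perm.mul_apply, Fin.rev_zero, Equiv.Perm.decomposeFin_symm_apply_zero,
      Fin.last_add_one, finRotate_succ_apply]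
  · simp only [Equiv.Perm.mul_apply, Equiv.Perm.decomposeFin_symm_apply_succ, Equiv.swap_self,
      Fin.revPerm_apply, Equiv.refl_apply, finRotate_succ_apply]
    ext
    have := j.is_lt
    simp [Fin.rev, Fin.add_def, Nat.mod_eq_of_lt]
    omega

private lemma aux_half (n : ℕ) : (n + 1) * n / 2 = n + n * (n - 1) / 2 := by
  cases n with
  | zero => rfl
  | succ k =>
    have h1 : (k + 1 + 1) * (k + 1) = (k + 1) * k + 2 * (k + 1) := by ring
    obtain ⟨r, hr⟩ := Nat.even_mul_succ_self k
    have h2 : (k + 1) * k = r + r := by rw [mul_comm]; exact hr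
    simp only [Nat.add_sub_cancel]
    omega

private lemma aux_sign_revPerm (n : ℕ) :
    Equiv.Perm.sign (Fin.revPerm : Equiv.Perm (Fin n)) = (-1) ^ (n * (n-1) / 2) := by
  induction n with
  | zero =>
    have : (Fin.revPerm : Equiv.Perm (Fin 0)) = 1 := by ext i; exact i.elim0
    simp [this]
  | succ n ih =>
    have h := congrArg Equiv.Perm.sign (aux_rotate_mul_rev n)
    rw [map_mul, Equiv.Perm.decomposeFin.symm_sign, if_pos rfl, one_mul, sign_finRotate, Nat.succ_sub_one, ih] at h
    have h2 : Equiv.Perm.sign (Fin.revPerm : Equiv.Perm (Fin (n+1)))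
        = (-1) ^ n * (-1) ^ (n * (n-1) / 2) := by
      rw [← h, ← mul_assoc, ← pow_add, ← two_mul, pow_mul, neg_one_sq, one_pow, one_mul]
    rw [h2, ← pow_add]
    congr 1
    have := aux_half n
    simp only [Nat.add_sub_cancel]
    omega

/-- The trace of the (2p-1)-fold wedge power of a symmetric-matrix-valued
1-form vanishes when p is even. -/
theorem trace_wedge_power_symmetric_vanishes_of_even
    {V : Type*} [AddCommGroup V] [Module ℝ V] {N : ℕ}
    (lam : V →ₗ[ℝ] Matrix (Fin N) (Fin N) ℝ)
    (hsymm : ∀ v : V, (lam v).transpose = lam v)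
    (p : ℕ) (hp0 : 0 < p) (hp : Even p)
    (v : Fin (2 * p - 1) → V) :
    ∑ σ : Equiv.Perm (Fin (2 * p - 1)), ((Equiv.Perm.sign σ : ℤ) : ℝ) *
      Matrix.trace ((List.ofFn fun i => lam (v (σ i))).prod) = 0 := by
  have hsign_r : Equiv.Perm.sign (Fin.revPerm : Equiv.Perm (Fin (2 * p - 1))) = -1 := by
    rw [aux_sign_revPerm]
    have hodd : Odd ((2 * p - 1) * ((2 * p - 1) - 1) / 2) := by
      obtain ⟨k, hk⟩ := hp
      have hk1 : 1 ≤ k := by omega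
      have heq : (2 * p - 1) * ((2 * p - 1) - 1) / 2 = (2 * p - 1) * (p - 1) := by
        have h1 : (2 * p - 1) * ((2 * p - 1) - 1) = ((2 * p - 1) * (p - 1)) * 2 := by
          cases p with
          | zero => omega
          | succ q =>
            have e1 : 2 * (q + 1) - 1 = 2 * q + 1 := by omega
            have e2 : 2 * (q + 1) - 1 - 1 = 2 * q := by omega
            have e3 : (q + 1) - 1 = q := by omega
            rw [e1, e3]
            have e2' : 2 * q + 1 - 1 = 2 * q := by omega
            rw [e2']; ring
        omega
      rw [heq, hk]
      exact Odd.mul ⟨2 * k - 1, by omega⟩ ⟨k - 1, by omega⟩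
    exact Odd.neg_one_pow hodd
  have hkey : ∀ σ : Equiv.Perm (Fin (2 * p - 1)),
      Matrix.trace ((List.ofFn fun i => lam (v (σ i))).prod)
        = Matrix.trace ((List.ofFn fun i => lam (v ((σ * Fin.revPerm : Equiv.Perm (Fin (2 * p - 1))) i))).prod) := by
    intro σ
    conv_lhs => rw [← Matrix.trace_transpose, Matrix.transpose_list_prod, List.map_ofFn]
    have h2 : List.ofFn ((Matrix.transpose : Matrix (Fin N) (Fin N) ℝ →
        Matrix (Fin N) (Fin N) ℝ) ∘ fun i => lam (v (σ i)))
        = List.ofFn fun i => lam (v (σ i)) := by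
      congr 1
      funext i
      exact hsymm _
    rw [h2, aux_reverse_ofFn]
    rfl
  have hre : ∑ σ : Equiv.Perm (Fin (2 * p - 1)), ((Equiv.Perm.sign σ : ℤ) : ℝ) *
        Matrix.trace ((List.ofFn fun i => lam (v (σ i))).prod)
      = ∑ σ : Equiv.Perm (Fin (2 * p - 1)),
          ((Equiv.Perm.sign (σ * Fin.revPerm) : ℤ) : ℝ) *
          Matrix.trace ((List.ofFn fun i => lam (v ((σ * Fin.revPerm : Equiv.Perm (Fin (2 * p - 1))) i))).prod) :=
    (Equiv.sum_comp (Equiv.mulRight (Fin.revPerm : Equiv.Perm (Fin (2 * p - 1))))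
      fun σ => ((Equiv.Perm.sign σ : ℤ) : ℝ) *
        Matrix.trace ((List.ofFn fun i => lam (v (σ i))).prod)).symm
  have hfinal : ∑ σ : Equiv.Perm (Fin (2 * p - 1)), ((Equiv.Perm.sign σ : ℤ) : ℝ) *
        Matrix.trace ((List.ofFn fun i => lam (v (σ i))).prod)
      = -∑ σ : Equiv.Perm (Fin (2 * p - 1)), ((Equiv.Perm.sign σ : ℤ) : ℝ) *
        Matrix.trace ((List.ofFn fun i => lam (v (σ i))).prod) := by
    conv_lhs => rw [hre]
    rw [← Finset.sum_neg_distrib]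
    refine Finset.sum_congr rfl fun σ _ => ?_
    rw [← hkey σ, map_mul, hsign_r]
    push_cast
    ring
  linarith [hfinal]
end

section
/- In the Lie algebra W_1 of formal vector fields in one variable, the Godbillon–Vey cochain is a 3-cocycle: define c(ξ,η,ζ) = det of the 3×3 matrix whose rows are (ξ(0), ξ'(0), ξ''(0)), (η(0), η'(0), η''(0)), (ζ(0), ζ'(0), ζ''(0)), where a formal vector field is identified with a formal power series f(x)d/dx with bracket [f d/dx, g d/dx] = (f g' − f' g) d/dx. Then c is an alternating 3-linear form on W_1 satisfying the Chevalley–Eilenberg cocycle condition dc = 0 (with trivial coefficients ℝ). -/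
/-- Formal derivative of a power series in one variable. -/
noncomputable def psDeriv (f : PowerSeries ℝ) : PowerSeries ℝ :=
  PowerSeries.mk fun k => ((k : ℝ) + 1) * PowerSeries.coeff (R := ℝ) (k + 1) f

/-- The bracket of `W₁ = ℝ[[x]]·d/dx`: `[f∂, g∂] = (f g' − f' g)∂`. -/
noncomputable def w1Br (f g : PowerSeries ℝ) : PowerSeries ℝ :=
  f * psDeriv g - psDeriv f * g

/-- The Godbillon–Vey cochain: `c(ξ,η,ζ)` is the determinant of the 3×3 matrix whose rows
are the values and first two derivatives at `0` of the three formal vector fields. -/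
noncomputable def gvC (v : Fin 3 → PowerSeries ℝ) : ℝ :=
  Matrix.det (Matrix.of fun i j : Fin 3 =>
    ((j : ℕ).factorial : ℝ) * PowerSeries.coeff (R := ℝ) (j : ℕ) (v i))

/-- `(w1Br(ξ_i, ξ_j), ξ_1, …, ξ̂_i, …, ξ̂_j, …, ξ_4)`. -/
noncomputable def gvIns (ξ : Fin 4 → PowerSeries ℝ) (i j : Fin 4) : Fin 3 → PowerSeries ℝ :=
  fun k =>
    if (k : ℕ) = 0 then w1Br (ξ i) (ξ j)
    else ξ ⟨if (k : ℕ) - 1 < (i : ℕ) then (k : ℕ) - 1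
            else if (k : ℕ) < (j : ℕ) then (k : ℕ)
            else (k : ℕ) + 1,
          by have hk := k.isLt; split_ifs <;> omega⟩

lemma coeff_psDeriv (f : PowerSeries ℝ) (k : ℕ) :
    PowerSeries.coeff (R := ℝ) k (psDeriv f) = ((k:ℝ)+1) * PowerSeries.coeff (R := ℝ) (k+1) f := by
  simp [psDeriv]

lemma ccDeriv (f : PowerSeries ℝ) :
    PowerSeries.constantCoeff (R := ℝ) (psDeriv f) = PowerSeries.coeff (R := ℝ) 1 f := by
  simpa using coeff_psDeriv f 0

lemma cm (f g : PowerSeries ℝ) (n : ℕ) :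
    PowerSeries.coeff (R := ℝ) n (f*g) =
      ∑ k ∈ Finset.range (n+1), PowerSeries.coeff (R := ℝ) k f * PowerSeries.coeff (R := ℝ) (n-k) g := by
  rw [PowerSeries.coeff_mul, Finset.Nat.sum_antidiagonal_eq_sum_range_succ_mk]

lemma br0 (f g : PowerSeries ℝ) :
    PowerSeries.coeff (R := ℝ) 0 (w1Br f g) =
      PowerSeries.coeff (R := ℝ) 0 f * PowerSeries.coeff (R := ℝ) 1 g
      - PowerSeries.coeff (R := ℝ) 1 f * PowerSeries.coeff (R := ℝ) 0 g := by
  simp [w1Br, cm, Finset.sum_range_succ, coeff_psDeriv, ccDeriv]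

lemma br1 (f g : PowerSeries ℝ) :
    PowerSeries.coeff (R := ℝ) 1 (w1Br f g) =
      2 * PowerSeries.coeff (R := ℝ) 0 f * PowerSeries.coeff (R := ℝ) 2 g
      - 2 * PowerSeries.coeff (R := ℝ) 2 f * PowerSeries.coeff (R := ℝ) 0 g := by
  simp [w1Br, cm, Finset.sum_range_succ, coeff_psDeriv, ccDeriv]; ring

lemma br2 (f g : PowerSeries ℝ) :
    PowerSeries.coeff (R := ℝ) 2 (w1Br f g) =
      3 * PowerSeries.coeff (R := ℝ) 0 f * PowerSeries.coeff (R := ℝ) 3 g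
      + PowerSeries.coeff (R := ℝ) 1 f * PowerSeries.coeff (R := ℝ) 2 g
      - PowerSeries.coeff (R := ℝ) 2 f * PowerSeries.coeff (R := ℝ) 1 g
      - 3 * PowerSeries.coeff (R := ℝ) 3 f * PowerSeries.coeff (R := ℝ) 0 g := by
  simp [w1Br, cm, Finset.sum_range_succ, coeff_psDeriv, ccDeriv]; ring

lemma gvC_eq (v : Fin 3 → PowerSeries ℝ) :
    gvC v =
      PowerSeries.coeff (R := ℝ) 0 (v 0) * PowerSeries.coeff (R := ℝ) 1 (v 1) * (2 * PowerSeries.coeff (R := ℝ) 2 (v 2))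
    - PowerSeries.coeff (R := ℝ) 0 (v 0) * (2 * PowerSeries.coeff (R := ℝ) 2 (v 1)) * PowerSeries.coeff (R := ℝ) 1 (v 2)
    - PowerSeries.coeff (R := ℝ) 1 (v 0) * PowerSeries.coeff (R := ℝ) 0 (v 1) * (2 * PowerSeries.coeff (R := ℝ) 2 (v 2))
    + PowerSeries.coeff (R := ℝ) 1 (v 0) * (2 * PowerSeries.coeff (R := ℝ) 2 (v 1)) * PowerSeries.coeff (R := ℝ) 0 (v 2)
    + (2 * PowerSeries.coeff (R := ℝ) 2 (v 0)) * PowerSeries.coeff (R := ℝ) 0 (v 1) * PowerSeries.coeff (R := ℝ) 1 (v 2)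
    - (2 * PowerSeries.coeff (R := ℝ) 2 (v 0)) * PowerSeries.coeff (R := ℝ) 1 (v 1) * PowerSeries.coeff (R := ℝ) 0 (v 2) := by
  rw [gvC, Matrix.det_fin_three]
  norm_num [Matrix.of_apply, Nat.factorial]

lemma gvC3 (p q r : PowerSeries ℝ) :
    gvC ![p, q, r] =
      PowerSeries.coeff (R := ℝ) 0 p * PowerSeries.coeff (R := ℝ) 1 q * (2 * PowerSeries.coeff (R := ℝ) 2 r)
    - PowerSeries.coeff (R := ℝ) 0 p * (2 * PowerSeries.coeff (R := ℝ) 2 q) * PowerSeries.coeff (R := ℝ) 1 r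
    - PowerSeries.coeff (R := ℝ) 1 p * PowerSeries.coeff (R := ℝ) 0 q * (2 * PowerSeries.coeff (R := ℝ) 2 r)
    + PowerSeries.coeff (R := ℝ) 1 p * (2 * PowerSeries.coeff (R := ℝ) 2 q) * PowerSeries.coeff (R := ℝ) 0 r
    + (2 * PowerSeries.coeff (R := ℝ) 2 p) * PowerSeries.coeff (R := ℝ) 0 q * PowerSeries.coeff (R := ℝ) 1 r
    - (2 * PowerSeries.coeff (R := ℝ) 2 p) * PowerSeries.coeff (R := ℝ) 1 q * PowerSeries.coeff (R := ℝ) 0 r := by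
  rw [gvC_eq]; simp

lemma gvIns_eq (ξ : Fin 4 → PowerSeries ℝ) :
    gvIns ξ 0 1 = ![w1Br (ξ 0) (ξ 1), ξ 2, ξ 3] ∧
    gvIns ξ 0 2 = ![w1Br (ξ 0) (ξ 2), ξ 1, ξ 3] ∧
    gvIns ξ 0 3 = ![w1Br (ξ 0) (ξ 3), ξ 1, ξ 2] ∧
    gvIns ξ 1 2 = ![w1Br (ξ 1) (ξ 2), ξ 0, ξ 3] ∧
    gvIns ξ 1 3 = ![w1Br (ξ 1) (ξ 3), ξ 0, ξ 2] ∧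
    gvIns ξ 2 3 = ![w1Br (ξ 2) (ξ 3), ξ 0, ξ 1] := by
  refine ⟨?_, ?_, ?_, ?_, ?_, ?_⟩ <;>
    (funext k; fin_cases k <;> simp [gvIns, show ((3:Fin 4):ℕ) = 3 from rfl])


/-- the Godbillon–Vey cochain is an alternating 3-linear form on `W₁` and a
Chevalley–Eilenberg 3-cocycle with trivial coefficients. -/
theorem godbillonVey_is_three_cocycle :
    (∀ (v : Fin 3 → PowerSeries ℝ) (σ : Equiv.Perm (Fin 3)),
      gvC (v ∘ σ) = ((Equiv.Perm.sign σ : ℤ) : ℝ) * gvC v) ∧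
    (∀ (v : Fin 3 → PowerSeries ℝ) (i j : Fin 3), i ≠ j → v i = v j → gvC v = 0) ∧
    (∀ (v : Fin 3 → PowerSeries ℝ) (i : Fin 3) (a : ℝ) (f g : PowerSeries ℝ),
      gvC (Function.update v i (a • f + g)) =
        a * gvC (Function.update v i f) + gvC (Function.update v i g)) ∧
    (∀ ξ : Fin 4 → PowerSeries ℝ,
      ∑ i : Fin 4, ∑ j : Fin 4,
        (if i < j then ((-1 : ℝ) ^ ((i : ℕ) + (j : ℕ))) * gvC (gvIns ξ i j) else 0) = 0) := by
  refine ⟨?_, ?_, ?_, ?_⟩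
  · intro v σ
    have := Matrix.det_permute σ (Matrix.of fun i j : Fin 3 =>
      ((j : ℕ).factorial : ℝ) * PowerSeries.coeff (R := ℝ) (j : ℕ) (v i))
    simpa [gvC, Units.smul_def, zsmul_eq_mul, Matrix.submatrix] using this
  · intro v i j hij hv
    exact Matrix.det_zero_of_row_eq hij (by funext k; simp [hv])
  · intro v i a f g
    set M : Matrix (Fin 3) (Fin 3) ℝ := Matrix.of fun i j : Fin 3 =>
      ((j : ℕ).factorial : ℝ) * PowerSeries.coeff (R := ℝ) (j : ℕ) (v i) with hM
    have key : ∀ w : PowerSeries ℝ, gvC (Function.update v i w) =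
        (M.updateRow i (fun j => ((j : ℕ).factorial : ℝ) * PowerSeries.coeff (R := ℝ) (j : ℕ) w)).det := by
      intro w
      unfold gvC
      congr 1
      funext i' j
      by_cases h : i' = i <;> simp [Matrix.updateRow_apply, Function.update_apply, h, hM]
    have hrow : (fun j : Fin 3 => ((j : ℕ).factorial : ℝ) * PowerSeries.coeff (R := ℝ) (j : ℕ) (a • f + g)) =
        a • (fun j : Fin 3 => ((j : ℕ).factorial : ℝ) * PowerSeries.coeff (R := ℝ) (j : ℕ) f) +
          (fun j : Fin 3 => ((j : ℕ).factorial : ℝ) * PowerSeries.coeff (R := ℝ) (j : ℕ) g) := by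
      funext j; simp [map_add, map_smul]; ring
    rw [key, key, key, hrow, Matrix.det_updateRow_add, Matrix.det_updateRow_smul]
  · intro ξ
    obtain ⟨h1, h2, h3, h4, h5, h6⟩ := gvIns_eq ξ
    simp only [Fin.sum_univ_four, show ((0:Fin 4):ℕ)=0 from rfl, show ((1:Fin 4):ℕ)=1 from rfl,
      show ((2:Fin 4):ℕ)=2 from rfl, show ((3:Fin 4):ℕ)=3 from rfl,
      show ¬(0:Fin 4) < 0 from by decide, show ((0:Fin 4) < 1) from by decide,
      show ((0:Fin 4) < 2) from by decide, show ((0:Fin 4) < 3) from by decide,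
      show ¬(1:Fin 4) < 0 from by decide, show ¬(1:Fin 4) < 1 from by decide,
      show ((1:Fin 4) < 2) from by decide, show ((1:Fin 4) < 3) from by decide,
      show ¬(2:Fin 4) < 0 from by decide, show ¬(2:Fin 4) < 1 from by decide,
      show ¬(2:Fin 4) < 2 from by decide, show ((2:Fin 4) < 3) from by decide,
      show ¬(3:Fin 4) < 0 from by decide, show ¬(3:Fin 4) < 1 from by decide,
      show ¬(3:Fin 4) < 2 from by decide, show ¬(3:Fin 4) < 3 from by decide,
      if_true, if_false, h1, h2, h3, h4, h5, h6, gvC3, br0, br1, br2]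
    norm_num
    ring
end

section
/- The first formal Pontryagin cocycle: define Ψ^i_j = Σ_k c^i_{jk} ∧ c^k (an alternating 2-form on W_n) and Ψ_1 = tr Ψ = Σ_i Ψ^i_i. Then Ψ_1 is a 2-cocycle of W_n with trivial real coefficients: (dΨ_1)(ξ,η,ζ) = 0 for all ξ,η,ζ ∈ W_n, where (dω)(ξ,η,ζ) = −ω([ξ,η],ζ) + ω([ξ,ζ],η) − ω([η,ζ],ξ) for 2-cochains ω. -/
/-- Formal vector fields in `n` variables. -/
abbrev FormalVF (n : ℕ) := Fin n → MvPowerSeries (Fin n) ℝ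

/-- Formal partial derivative `∂/∂x^j`. -/
noncomputable def fpd {n : ℕ} (j : Fin n) (f : MvPowerSeries (Fin n) ℝ) :
    MvPowerSeries (Fin n) ℝ :=
  fun m => ((m j : ℝ) + 1) * MvPowerSeries.coeff (m + Finsupp.single j 1) f

/-- The bracket of `W_n`. -/
noncomputable def wBr {n : ℕ} (ξ η : FormalVF n) : FormalVF n :=
  fun i => ∑ j : Fin n, (ξ j * fpd j (η i) - η j * fpd j (ξ i))

/-- Evaluation at `0`. -/
noncomputable def ev0 {n : ℕ} (f : MvPowerSeries (Fin n) ℝ) : ℝ :=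
  MvPowerSeries.coeff 0 f

/-- The first formal Pontryagin cochain `Ψ₁ = tr Ψ = Σ_{i,k} c^i_{ik} ∧ c^k`,
with `(α∧β)(ξ,η) = α(ξ)β(η) − α(η)β(ξ)`. -/
noncomputable def Psi1 {n : ℕ} (ξ η : FormalVF n) : ℝ :=
  ∑ i : Fin n, ∑ k : Fin n,
    (ev0 (fpd i (fpd k (ξ i))) * ev0 (η k) - ev0 (fpd i (fpd k (η i))) * ev0 (ξ k))

section Aux

open MvPowerSeries Finset

lemma coeff_fpd {n : ℕ} (j : Fin n) (f : MvPowerSeries (Fin n) ℝ) (m : Fin n →₀ ℕ) :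
    coeff m (fpd j f) = ((m j : ℝ) + 1) * coeff (m + Finsupp.single j 1) f := rfl

lemma fpd_add {n : ℕ} (j : Fin n) (f g : MvPowerSeries (Fin n) ℝ) :
    fpd j (f + g) = fpd j f + fpd j g := by
  ext m
  simp only [coeff_fpd, map_add]
  ring

lemma fpd_sub {n : ℕ} (j : Fin n) (f g : MvPowerSeries (Fin n) ℝ) :
    fpd j (f - g) = fpd j f - fpd j g := by
  ext m
  simp only [coeff_fpd, map_sub]
  ring

lemma fpd_sum {n : ℕ} (j : Fin n) (s : Finset (Fin n)) (f : Fin n → MvPowerSeries (Fin n) ℝ) :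
    fpd j (∑ i ∈ s, f i) = ∑ i ∈ s, fpd j (f i) := by
  ext m
  simp only [coeff_fpd, map_sum, Finset.mul_sum]

lemma fpd_comm {n : ℕ} (i k : Fin n) (f : MvPowerSeries (Fin n) ℝ) :
    fpd i (fpd k f) = fpd k (fpd i f) := by
  ext m
  simp only [coeff_fpd, Finsupp.coe_add, Pi.add_apply, Finsupp.single_apply]
  rw [show m + Finsupp.single i 1 + Finsupp.single k 1
      = m + Finsupp.single k 1 + Finsupp.single i 1 by abel]
  by_cases h : i = k
  · subst h; ring
  · rw [if_neg h, if_neg (fun h' => h h'.symm)]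
    ring

/-- Auxiliary cast. -/
def cj {n : ℕ} (j : Fin n) (a : Fin n →₀ ℕ) : ℝ := (a j : ℝ)

lemma shift_sum {n : ℕ} (j : Fin n) (m : Fin n →₀ ℕ)
    (F : (Fin n →₀ ℕ) → (Fin n →₀ ℕ) → ℝ) :
    ∑ p ∈ antidiagonal (m + Finsupp.single j 1), cj j p.1 * F p.1 p.2
    = ∑ p ∈ antidiagonal m, (cj j p.1 + 1) * F (p.1 + Finsupp.single j 1) p.2 := by
  rw [← Finset.sum_filter_of_ne (p := fun p => p.1 j ≠ 0)
    (by intro x _ hx h0; apply hx; simp [cj, h0])]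
  refine (Finset.sum_bij' (fun p _ => (p.1 + Finsupp.single j 1, p.2))
    (fun p _ => (p.1 - Finsupp.single j 1, p.2)) ?_ ?_ ?_ ?_ ?_).symm
  · intro p hp
    rw [HasAntidiagonal.mem_antidiagonal] at hp
    rw [mem_filter, HasAntidiagonal.mem_antidiagonal]
    constructor
    · rw [add_right_comm, hp]
    · simp
  · intro p hp
    rw [mem_filter, HasAntidiagonal.mem_antidiagonal] at hp
    obtain ⟨h1, h2⟩ := hp
    have hle : Finsupp.single j 1 ≤ p.1 := by
      rw [Finsupp.single_le_iff]
      omega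
    rw [HasAntidiagonal.mem_antidiagonal]
    have h3 : p.1 - Finsupp.single j 1 + Finsupp.single j 1 + p.2
        = m + Finsupp.single j 1 := by
      rw [tsub_add_cancel_of_le hle, h1]
    rw [add_right_comm] at h3
    exact add_right_cancel h3
  · intro p hp
    simp
  · intro p hp
    rw [mem_filter, HasAntidiagonal.mem_antidiagonal] at hp
    have hle : Finsupp.single j 1 ≤ p.1 := by
      rw [Finsupp.single_le_iff]
      omega
    simp [tsub_add_cancel_of_le hle]
  · intro p hp
    have h4 : cj j (p.1 + Finsupp.single j 1) = cj j p.1 + 1 := by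
      simp [cj, Finsupp.add_apply, Finsupp.single_eq_same]
    rw [h4]

/-- Leibniz rule for `fpd`. -/
lemma fpd_mul {n : ℕ} (j : Fin n) (f g : MvPowerSeries (Fin n) ℝ) :
    fpd j (f * g) = fpd j f * g + f * fpd j g := by
  ext m
  rw [map_add, coeff_fpd, coeff_mul, coeff_mul, coeff_mul, Finset.mul_sum]
  have lhs : ∀ p ∈ antidiagonal (m + Finsupp.single j 1),
      ((m j : ℝ) + 1) * (coeff p.1 f * coeff p.2 g)
      = cj j p.1 * (coeff p.1 f * coeff p.2 g)
        + cj j p.2 * (coeff p.1 f * coeff p.2 g) := by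
    intro p hp
    rw [HasAntidiagonal.mem_antidiagonal] at hp
    have h1 : p.1 j + p.2 j = m j + 1 := by
      have := DFunLike.congr_fun hp j
      simpa [Finsupp.add_apply, Finsupp.single_eq_same] using this
    have hc : cj j p.1 + cj j p.2 = (m j : ℝ) + 1 := by
      simp only [cj]
      exact_mod_cast h1
    rw [← hc]; ring
  rw [Finset.sum_congr rfl lhs, Finset.sum_add_distrib]
  congr 1
  · rw [shift_sum j m (fun a b => coeff a f * coeff b g)]
    apply Finset.sum_congr rfl
    intro p hp
    rw [coeff_fpd]
    simp only [cj]
    ring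
  · rw [Finsupp.sum_antidiagonal_swap (m + Finsupp.single j 1)
      (fun a b => cj j b * (coeff a f * coeff b g))]
    rw [shift_sum j m (fun a b => coeff b f * coeff a g)]
    rw [Finsupp.sum_antidiagonal_swap m
      (fun a b => (cj j a + 1) * (coeff b f * coeff (a + Finsupp.single j 1) g))]
    apply Finset.sum_congr rfl
    intro p hp
    rw [coeff_fpd]
    simp only [cj]
    ring

lemma ev0_add {n : ℕ} (f g : MvPowerSeries (Fin n) ℝ) : ev0 (f + g) = ev0 f + ev0 g :=
  map_add (coeff 0) f g

lemma ev0_sub {n : ℕ} (f g : MvPowerSeries (Fin n) ℝ) : ev0 (f - g) = ev0 f - ev0 g :=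
  map_sub (coeff 0) f g

lemma ev0_sum {n : ℕ} (s : Finset (Fin n)) (f : Fin n → MvPowerSeries (Fin n) ℝ) :
    ev0 (∑ i ∈ s, f i) = ∑ i ∈ s, ev0 (f i) :=
  map_sum (coeff 0) f s

lemma ev0_mul {n : ℕ} (f g : MvPowerSeries (Fin n) ℝ) : ev0 (f * g) = ev0 f * ev0 g := by
  unfold ev0
  rw [coeff_zero_eq_constantCoeff, map_mul]

/-- The divergence. -/
noncomputable def dv {n : ℕ} (φ : FormalVF n) : MvPowerSeries (Fin n) ℝ :=
  ∑ i : Fin n, fpd i (φ i)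

lemma Psi1_eq {n : ℕ} (φ ψ : FormalVF n) :
    Psi1 φ ψ = ∑ k : Fin n,
      (ev0 (fpd k (dv φ)) * ev0 (ψ k) - ev0 (fpd k (dv ψ)) * ev0 (φ k)) := by
  have hdiv : ∀ (χ : FormalVF n) (k : Fin n),
      ev0 (fpd k (dv χ)) = ∑ i : Fin n, ev0 (fpd i (fpd k (χ i))) := by
    intro χ k
    rw [dv, fpd_sum, ev0_sum]
    exact Finset.sum_congr rfl fun i _ => by rw [fpd_comm]
  unfold Psi1
  rw [Finset.sum_comm]
  apply Finset.sum_congr rfl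
  intro k _
  rw [hdiv φ k, hdiv ψ k, Finset.sum_sub_distrib, Finset.sum_mul, Finset.sum_mul]

lemma dv_wBr {n : ℕ} (ξ η : FormalVF n) :
    dv (wBr ξ η) = ∑ j : Fin n, (ξ j * fpd j (dv η) - η j * fpd j (dv ξ)) := by
  have step1 : dv (wBr ξ η) = ∑ i : Fin n, ∑ j : Fin n,
      (fpd i (ξ j) * fpd j (η i) + ξ j * fpd i (fpd j (η i))
        - fpd i (η j) * fpd j (ξ i) - η j * fpd i (fpd j (ξ i))) := by
    unfold dv wBr
    apply Finset.sum_congr rfl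
    intro i _
    rw [fpd_sum]
    apply Finset.sum_congr rfl
    intro j _
    rw [fpd_sub, fpd_mul, fpd_mul]
    ring
  have step2 : ∀ i j : Fin n,
      (fpd i (ξ j) * fpd j (η i) + ξ j * fpd i (fpd j (η i))
        - fpd i (η j) * fpd j (ξ i) - η j * fpd i (fpd j (ξ i)))
      = (fpd i (ξ j) * fpd j (η i) - fpd i (η j) * fpd j (ξ i))
        + (ξ j * fpd i (fpd j (η i)) - η j * fpd i (fpd j (ξ i))) := by
    intro i j; ring
  rw [step1]
  simp only [step2]
  simp only [Finset.sum_add_distrib]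
  have hcross : ∑ i : Fin n, ∑ j : Fin n,
      (fpd i (ξ j) * fpd j (η i) - fpd i (η j) * fpd j (ξ i)) = 0 := by
    simp only [Finset.sum_sub_distrib]
    rw [show ∑ i : Fin n, ∑ j : Fin n, fpd i (η j) * fpd j (ξ i)
        = ∑ i : Fin n, ∑ j : Fin n, fpd j (η i) * fpd i (ξ j) from Finset.sum_comm]
    rw [sub_eq_zero]
    apply Finset.sum_congr rfl
    intro i _
    apply Finset.sum_congr rfl
    intro j _
    ring
  rw [hcross, zero_add, Finset.sum_comm]
  apply Finset.sum_congr rfl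
  intro j _
  rw [Finset.sum_sub_distrib, ← Finset.mul_sum, ← Finset.mul_sum]
  have hη : ∑ i : Fin n, fpd i (fpd j (η i)) = fpd j (dv η) := by
    rw [dv, fpd_sum]
    exact Finset.sum_congr rfl fun i _ => fpd_comm i j (η i)
  have hξ : ∑ i : Fin n, fpd i (fpd j (ξ i)) = fpd j (dv ξ) := by
    rw [dv, fpd_sum]
    exact Finset.sum_congr rfl fun i _ => fpd_comm i j (ξ i)
  rw [hη, hξ]

/-- The expanded term of `Ψ₁([ξ,η],ζ)`. -/
noncomputable def Fterm {n : ℕ} (ξ η ζ : FormalVF n) (k j : Fin n) : ℝ :=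
  (ev0 (ξ j) * ev0 (fpd k (fpd j (dv η))) + ev0 (fpd k (ξ j)) * ev0 (fpd j (dv η))
    - ev0 (η j) * ev0 (fpd k (fpd j (dv ξ))) - ev0 (fpd k (η j)) * ev0 (fpd j (dv ξ)))
    * ev0 (ζ k)
  - ev0 (fpd k (dv ζ))
    * (ev0 (ξ j) * ev0 (fpd j (η k)) - ev0 (η j) * ev0 (fpd j (ξ k)))

lemma Psi1_wBr {n : ℕ} (ξ η ζ : FormalVF n) :
    Psi1 (wBr ξ η) ζ = ∑ k : Fin n, ∑ j : Fin n, Fterm ξ η ζ k j := by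
  rw [Psi1_eq]
  apply Finset.sum_congr rfl
  intro k _
  have h1 : ev0 (fpd k (dv (wBr ξ η)))
      = ∑ j : Fin n, (ev0 (ξ j) * ev0 (fpd k (fpd j (dv η)))
          + ev0 (fpd k (ξ j)) * ev0 (fpd j (dv η))
          - ev0 (η j) * ev0 (fpd k (fpd j (dv ξ)))
          - ev0 (fpd k (η j)) * ev0 (fpd j (dv ξ))) := by
    rw [dv_wBr, fpd_sum, ev0_sum]
    apply Finset.sum_congr rfl
    intro j _
    rw [fpd_sub, ev0_sub, fpd_mul, fpd_mul, ev0_add, ev0_add, ev0_mul, ev0_mul,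
      ev0_mul, ev0_mul]
    ring
  have h2 : ev0 ((wBr ξ η) k)
      = ∑ j : Fin n, (ev0 (ξ j) * ev0 (fpd j (η k)) - ev0 (η j) * ev0 (fpd j (ξ k))) := by
    show ev0 (∑ j : Fin n, (ξ j * fpd j (η k) - η j * fpd j (ξ k))) = _
    rw [ev0_sum]
    apply Finset.sum_congr rfl
    intro j _
    rw [ev0_sub, ev0_mul, ev0_mul]
  rw [h1, h2, Finset.sum_mul, Finset.mul_sum, ← Finset.sum_sub_distrib]
  rfl

end Aux

/-- `Ψ₁` is a 2-cocycle of `W_n` with trivial real coefficients: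
`(dΨ₁)(ξ,η,ζ) = −Ψ₁([ξ,η],ζ) + Ψ₁([ξ,ζ],η) − Ψ₁([η,ζ],ξ) = 0`. -/
theorem Psi1_is_cocycle (n : ℕ) (ξ η ζ : FormalVF n) :
    -Psi1 (wBr ξ η) ζ + Psi1 (wBr ξ ζ) η - Psi1 (wBr η ζ) ξ = 0 := by
  rw [Psi1_wBr, Psi1_wBr, Psi1_wBr]
  set G : Fin n → Fin n → ℝ :=
    fun k j => -Fterm ξ η ζ k j + Fterm ξ ζ η k j - Fterm η ζ ξ k j with hG
  have hcomb : -(∑ k : Fin n, ∑ j : Fin n, Fterm ξ η ζ k j)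
      + (∑ k : Fin n, ∑ j : Fin n, Fterm ξ ζ η k j)
      - (∑ k : Fin n, ∑ j : Fin n, Fterm η ζ ξ k j)
      = ∑ k : Fin n, ∑ j : Fin n, G k j := by
    rw [← Finset.sum_neg_distrib, ← Finset.sum_add_distrib, ← Finset.sum_sub_distrib]
    apply Finset.sum_congr rfl
    intro k _
    rw [← Finset.sum_neg_distrib, ← Finset.sum_add_distrib, ← Finset.sum_sub_distrib]
  rw [hcomb]
  have hzero : ∀ k j : Fin n, G k j + G j k = 0 := by
    intro k j
    simp only [hG, Fterm]
    rw [fpd_comm k j (dv ξ), fpd_comm k j (dv η), fpd_comm k j (dv ζ)]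
    ring
  have hswap : (∑ k : Fin n, ∑ j : Fin n, G k j)
      = ∑ k : Fin n, ∑ j : Fin n, G j k := Finset.sum_comm
  have h2 : (∑ k : Fin n, ∑ j : Fin n, G k j) + (∑ k : Fin n, ∑ j : Fin n, G k j) = 0 := by
    nth_rewrite 2 [hswap]
    rw [← Finset.sum_add_distrib]
    rw [show (0 : ℝ) = ∑ k : Fin n, (0 : ℝ) by simp]
    apply Finset.sum_congr rfl
    intro k _
    rw [← Finset.sum_add_distrib]
    rw [show (0 : ℝ) = ∑ j : Fin n, (0 : ℝ) by simp]
    exact Finset.sum_congr rfl fun j _ => hzero k j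
  linarith
end

section
/- The integrand identity for Λ_p: for odd p, set λ = (1/2)(γ + γᵗ) and α = (1/2)(γ − γᵗ) where γ = (c^i_j) is a matrix of 1-forms, and let Ψ, Ψᵗ be matrix-valued 2-forms satisfying dλ = [α,λ] + (1/2)(Ψ + Ψᵗ), dΨ = [λ,Ψ] + [α,Ψ], dΨᵗ = −[λ,Ψᵗ] + [α,Ψᵗ]. Define Ψ(t) = (t/2)Ψ + ((t−1)/2)Ψᵗ + (t−t²)[λ,λ]. Then ∫_0^1 (d/dt) Q_p(Ψ(t)) dt = Q_p(Ψ/2) + Q_p(Ψᵗ/2), where Q_p(X) = tr(X^p) extended multilinearly to form-valued arguments via the symmetrized trace. -/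
open Polynomial

/-- The matrix-valued polynomial `Ψ(t) = (t/2)Ψ + ((t−1)/2)Ψᵗ + (t−t²)[λ,λ]`, as a matrix
over `A[t]`; `lamBr` stands for the even matrix `[λ,λ]`. -/
noncomputable def PsiT {A : Type*} [Ring A] [Algebra ℝ A] {N : ℕ}
    (Psi Psit lamBr : Matrix (Fin N) (Fin N) A) :
    Matrix (Fin N) (Fin N) (Polynomial A) :=
  (Polynomial.X : Polynomial A) • ((1 / 2 : ℝ) • Psi.map Polynomial.C)
    + ((Polynomial.X - 1 : Polynomial A)) • ((1 / 2 : ℝ) • Psit.map Polynomial.C)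
    + ((Polynomial.X - Polynomial.X ^ 2 : Polynomial A)) • lamBr.map Polynomial.C

/-- Evaluation at a central element, as a ring hom (valid over a noncommutative ring). -/
noncomputable def evalCentral {A : Type*} [Ring A] (x : A) (hx : ∀ a : A, Commute a x) :
    Polynomial A →+* A :=
  Polynomial.eval₂RingHom' (RingHom.id A) x (fun a => hx a)

lemma evalCentral_apply {A : Type*} [Ring A] (x : A) (hx : ∀ a : A, Commute a x)
    (q : Polynomial A) : evalCentral x hx q = q.eval x := rfl

lemma trace_map_hom {A B : Type*} [Ring A] [Ring B] {N : ℕ} (f : A →+* B)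
    (M : Matrix (Fin N) (Fin N) A) :
    Matrix.trace (M.map f) = f (Matrix.trace M) := by
  simp [Matrix.trace, Matrix.diag, Matrix.map_apply]

lemma hom_trace_pow {A : Type*} [Ring A] {N : ℕ} (f : Polynomial A →+* A)
    (M : Matrix (Fin N) (Fin N) (Polynomial A)) (p : ℕ) :
    f (Matrix.trace (M ^ p)) = Matrix.trace ((M.map f) ^ p) := by
  have h : M.map f = f.mapMatrix M := rfl
  rw [h, ← map_pow, ← trace_map_hom]
  rfl

lemma map_hom_PsiT {A : Type*} [Ring A] [Algebra ℝ A] {N : ℕ}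
    (Psi Psit lamBr : Matrix (Fin N) (Fin N) A) (f : Polynomial A →+* A)
    (hf : ∀ a : A, f (Polynomial.C a) = a) :
    (PsiT Psi Psit lamBr).map f =
      f Polynomial.X • ((1 / 2 : ℝ) • Psi)
        + (f Polynomial.X - 1) • ((1 / 2 : ℝ) • Psit)
        + (f Polynomial.X - f Polynomial.X ^ 2) • lamBr := by
  ext i j
  simp only [PsiT, Matrix.map_apply, Matrix.add_apply, Matrix.smul_apply, smul_eq_mul,
    Polynomial.smul_C, map_add, map_mul, map_sub, map_one, map_pow, hf]

/-- for odd `p`, `∫₀¹ (d/dt) Q_p(Ψ(t)) dt = Q_p(Ψ/2) + Q_p(Ψᵗ/2)`, where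
`Q_p(X) = tr(X^p)` (the symmetrized trace on powers of a single even-degree argument) and
the integral of the derivative of the polynomial `t ↦ Q_p(Ψ(t))` is its evaluation at `1`
minus its evaluation at `0`. -/
theorem integral_deriv_Qp_PsiT {A : Type*} [Ring A] [Algebra ℝ A] {N : ℕ}
    (p : ℕ) (hp : Odd p) (Psi Psit lamBr : Matrix (Fin N) (Fin N) A) :
    Polynomial.eval 1 (Matrix.trace (PsiT Psi Psit lamBr ^ p))
      - Polynomial.eval 0 (Matrix.trace (PsiT Psi Psit lamBr ^ p)) =
    Matrix.trace (((1 / 2 : ℝ) • Psi) ^ p) + Matrix.trace (((1 / 2 : ℝ) • Psit) ^ p) := by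
  rw [← evalCentral_apply 1 (fun a => Commute.one_right a),
      ← evalCentral_apply 0 (fun a => Commute.zero_right a),
      hom_trace_pow, hom_trace_pow,
      map_hom_PsiT Psi Psit lamBr _ (fun a => by simp [evalCentral]),
      map_hom_PsiT Psi Psit lamBr _ (fun a => by simp [evalCentral])]
  have h1 : (evalCentral (1 : A) (fun a => Commute.one_right a)) Polynomial.X = 1 := by
    simp [evalCentral]
  have h0 : (evalCentral (0 : A) (fun a => Commute.zero_right a)) Polynomial.X = 0 := by
    simp [evalCentral]
  rw [h1, h0]
  simp [pow_two, hp.neg_pow, sub_neg_eq_add]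
end

section
/- Vanishing ranges for relative cohomology dimension bounds via the Vey basis: in the free graded-commutative algebra generated by elements Λ_{p} of degree 2p−1 for odd p ≤ n and Ψ_r of degree 2r for 1 ≤ r ≤ n, consider monomials Λ_{p_1}⋯Λ_{p_l} Ψ_{r_1}⋯Ψ_{r_k} subject to: p_1 < ⋯ < p_l all odd, r_1 ≤ ⋯ ≤ r_k, p_1 ≥ r_1, r_1 + ⋯ + r_k ≤ n, and p_1 + r_1 + ⋯ + r_k > n. Then every such monomial has total degree m satisfying 2n+1 ≤ m, and m ≤ n(n+3)/2 if n is even, and m ≤ n(n+5)/2 if n is odd. -/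
open Finset

lemma odd_filter_eq (n : ℕ) :
    (Finset.Icc 1 n).filter (fun d => Odd d) =
      (Finset.range ((n+1)/2)).image (fun t => 2*t+1) := by
  ext d
  simp only [Finset.mem_filter, Finset.mem_Icc, Finset.mem_image, Finset.mem_range,
    Nat.odd_iff]
  constructor
  · rintro ⟨⟨h1, h2⟩, h3⟩
    exact ⟨d / 2, by omega, by omega⟩
  · rintro ⟨t, ht, rfl⟩
    omega

lemma le_two_mul_sq (T : ℕ) : T ≤ 2*T*T := by
  cases T with
  | zero => simp
  | succ t => nlinarith

lemma sum_odd_deg (n : ℕ) :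
    ∑ d ∈ (Finset.Icc 1 n).filter (fun d => Odd d), (2*d - 1)
      = 2 * ((n+1)/2) * ((n+1)/2) - ((n+1)/2) := by
  rw [odd_filter_eq, Finset.sum_image (by intro a _ b _ h; simp only at h; omega)]
  induction ((n+1)/2) with
  | zero => simp
  | succ T ih =>
    rw [Finset.sum_range_succ, ih]
    have h1 : T ≤ 2*T*T := le_two_mul_sq T
    have h2 : T+1 ≤ 2*(T+1)*(T+1) := le_two_mul_sq (T+1)
    have h3 : 1 ≤ 2*(2*T+1) := by omega
    zify [h1, h2, h3]
    ring

/-- every Vey-basis monomial `Λ_{p_1}⋯Λ_{p_l} Ψ_{r_1}⋯Ψ_{r_k}`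
(with `p_1 < ⋯ < p_l` odd, `r_1 ≤ ⋯ ≤ r_k`, `p_1 ≥ r_1`, `r_1+⋯+r_k ≤ n`,
`p_1 + r_1 + ⋯ + r_k > n`, all `p_i, r_j ≤ n`) has total degree
`m = Σ(2p_i − 1) + Σ 2r_j` satisfying `2n+1 ≤ m`, with `m ≤ n(n+3)/2` for even `n`
and `m ≤ n(n+5)/2` for odd `n`. -/
theorem vey_basis_degree_bounds (n l k : ℕ) (hl : 0 < l)
    (p : Fin l → ℕ) (r : Fin k → ℕ)
    (hodd : ∀ i, Odd (p i)) (hppos : ∀ i, 0 < p i) (hple : ∀ i, p i ≤ n)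
    (hpmono : StrictMono p)
    (hrpos : ∀ j, 0 < r j) (hrle : ∀ j, r j ≤ n) (hrmono : Monotone r)
    (hp1r1 : ∀ hk : 0 < k, r ⟨0, hk⟩ ≤ p ⟨0, hl⟩)
    (hrsum : ∑ j, r j ≤ n)
    (hbig : n < p ⟨0, hl⟩ + ∑ j, r j) :
    2 * n + 1 ≤ (∑ i, (2 * p i - 1)) + ∑ j, 2 * r j ∧
    (Even n → (∑ i, (2 * p i - 1)) + ∑ j, 2 * r j ≤ n * (n + 3) / 2) ∧
    (Odd n → (∑ i, (2 * p i - 1)) + ∑ j, 2 * r j ≤ n * (n + 5) / 2) := by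
  set S := (Finset.Icc 1 n).filter (fun d => Odd d) with hS
  -- sum over p is bounded by sum over all odd d ≤ n
  have hinj : Set.InjOn p (Finset.univ : Finset (Fin l)) := fun a _ b _ h =>
    hpmono.injective h
  have hsub : Finset.image p Finset.univ ⊆ S := by
    intro d hd
    simp only [Finset.mem_image, Finset.mem_univ, true_and] at hd
    obtain ⟨i, rfl⟩ := hd
    simp only [hS, Finset.mem_filter, Finset.mem_Icc]
    exact ⟨⟨hppos i, hple i⟩, hodd i⟩
  have hsum_p : (∑ i, (2 * p i - 1)) ≤ ∑ d ∈ S, (2*d - 1) := by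
    calc (∑ i, (2 * p i - 1))
        = ∑ d ∈ Finset.image p Finset.univ, (2*d - 1) :=
          (Finset.sum_image (g := p) (f := fun d : ℕ => 2*d - 1) (fun a ha b hb h => hinj ha hb h)).symm
      _ ≤ ∑ d ∈ S, (2*d - 1) := Finset.sum_le_sum_of_subset hsub
  rw [sum_odd_deg] at hsum_p
  -- r-sum bound
  have hr2 : (∑ j, 2 * r j) = 2 * ∑ j, r j := by
    rw [Finset.mul_sum]
  -- lower bound
  have hfirst : (2 * p ⟨0, hl⟩ - 1) ≤ ∑ i, (2 * p i - 1) :=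
    Finset.single_le_sum (f := fun i : Fin l => 2 * p i - 1) (fun i _ => Nat.zero_le _)
      (Finset.mem_univ (⟨0, hl⟩ : Fin l))
  have hp0 : 0 < p ⟨0, hl⟩ := hppos _
  constructor
  · omega
  constructor
  · rintro ⟨c, rfl⟩
    have hT : (c + c + 1) / 2 = c := by omega
    rw [hT] at hsum_p
    have hgoal : (c + c) * (c + c + 3) / 2 = 2*c*c + 3*c := by
      have : (c + c) * (c + c + 3) = 2 * (2*c*c + 3*c) := by ring
      omega
    rw [hgoal]
    have hc : c ≤ 2*c*c := le_two_mul_sq c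
    omega
  · rintro ⟨c, rfl⟩
    have hT : (2*c + 1 + 1) / 2 = c + 1 := by omega
    rw [hT] at hsum_p
    have hgoal : (2*c+1) * (2*c+1 + 5) / 2 = 2*c*c + 7*c + 3 := by
      have : (2*c+1) * (2*c+1+5) = 2 * (2*c*c + 7*c + 3) := by ring
      omega
    rw [hgoal]
    have hc : c + 1 ≤ 2*(c+1)*(c+1) := le_two_mul_sq (c+1)
    have hexp : 2*(c+1)*(c+1) = 2*c*c + 4*c + 2 := by ring
    omega
end
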